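/- For any graphs G and H, γ_R(G □ H) ≥ γ(G)·γ(H), where γ_R denotes the Roman domination number and □ the Cartesian product. -/

import Mathlib

open Finset

/-- A `k`-rainbow dominating function: every vertex assigned `∅` sees all `k` colors
among its neighbors. -/
def SimpleGraph.IsRainbowDF {V : Type*} {k : ℕ} (G : SimpleGraph V)
    (f : V → Finset (Fin k)) : Prop :=
  ∀ v, f v = ∅ → ∀ c : Fin k, ∃ u, G.Adj v u ∧ c ∈ f u

/-- The `k`-rainbow domination number. -/
noncomputable def SimpleGraph.rainbowNum {V : Type*} [Fintype V] (G : SimpleGraph V)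
    (k : ℕ) : ℕ :=
  sInf {w | ∃ f : V → Finset (Fin k), G.IsRainbowDF f ∧ w = ∑ v, (f v).card}

/-- `S` is a dominating set of `G`. -/
def SimpleGraph.IsDomSet {V : Type*} (G : SimpleGraph V) (S : Set V) : Prop :=
  ∀ v, v ∉ S → ∃ u ∈ S, G.Adj v u

/-- The domination number. -/
noncomputable def SimpleGraph.domNum {V : Type*} [Fintype V] (G : SimpleGraph V) : ℕ :=
  sInf {n | ∃ S : Finset V, G.IsDomSet ↑S ∧ n = S.card}

/-- A Roman dominating function: values in `{0,1,2}` and every vertex with value `0`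
has a neighbor with value `2`. -/
def SimpleGraph.IsRomanDF {V : Type*} (G : SimpleGraph V) (g : V → ℕ) : Prop :=
  (∀ v, g v ≤ 2) ∧ ∀ v, g v = 0 → ∃ u, G.Adj v u ∧ g u = 2

/-- The Roman domination number. -/
noncomputable def SimpleGraph.romanNum {V : Type*} [Fintype V] (G : SimpleGraph V) : ℕ :=
  sInf {w | ∃ g : V → ℕ, G.IsRomanDF g ∧ w = ∑ v, g v}

/-- `γ_R(G □ H) ≥ γ(G)·γ(H)`. -/
theorem domNum_mul_domNum_le_romanNum_boxProd {V W : Type*} [Fintype V] [Fintype W]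
    (G : SimpleGraph V) (H : SimpleGraph W) :
    G.domNum * H.domNum ≤ (G.boxProd H).romanNum := by
  classical
  -- A minimum dominating set `U` of `G`.
  have hUne : {n | ∃ S : Finset V, G.IsDomSet ↑S ∧ n = S.card}.Nonempty :=
    ⟨(univ : Finset V).card, univ, fun v hv => absurd (by simp) hv, rfl⟩
  obtain ⟨U, hUdom, hUcard⟩ : ∃ S : Finset V, G.IsDomSet ↑S ∧ G.domNum = S.card :=
    Nat.sInf_mem hUne
  -- An optimal Roman dominating function `f` on `G □ H`.
  obtain ⟨f, hf, hfw⟩ : ∃ g : V × W → ℕ, (G.boxProd H).IsRomanDF g ∧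
      (G.boxProd H).romanNum = ∑ v, g v := by
    have hne : {w | ∃ g : V × W → ℕ, (G.boxProd H).IsRomanDF g ∧ w = ∑ v, g v}.Nonempty :=
      ⟨∑ _v : V × W, 2, fun _ => 2,
        ⟨fun _ => le_refl 2, fun v h => by simp at h⟩, rfl⟩
    exact Nat.sInf_mem hne
  -- Projection: each vertex of `G` is assigned a dominator in `U`.
  have hpex : ∀ v : V, ∃ u, u ∈ U ∧ (v = u ∨ G.Adj v u) := by
    intro v
    by_cases hv : v ∈ U
    · exact ⟨v, hv, Or.inl rfl⟩
    · obtain ⟨u, hu, hadj⟩ := hUdom v (by simpa using hv)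
      exact ⟨u, by simpa using hu, Or.inr hadj⟩
  set p : V → V := fun v => Classical.choose (hpex v) with hp
  have hpU : ∀ v, p v ∈ U := fun v => (Classical.choose_spec (hpex v)).1
  have hpadj : ∀ v, v = p v ∨ G.Adj v (p v) := fun v => (Classical.choose_spec (hpex v)).2
  -- Rows where the block of `u` has positive weight.
  set A : V → Finset W := fun u => univ.filter (fun h => ∃ v, p v = u ∧ 1 ≤ f (v, h))
    with hA
  -- Rows where the block of `u` is all-zero but every block vertex is
  -- horizontally dominated by a 2.
  set E : V → Finset W := fun u => univ.filter
    (fun h => (∀ v, p v = u → f (v, h) = 0) ∧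
      ∀ v, p v = u → ∃ g', G.Adj v g' ∧ f (g', h) = 2) with hE
  -- 2-cells in a given row.
  set T : W → Finset V := fun h => univ.filter (fun v => f (v, h) = 2) with hT
  -- Members of `U` whose block at row `h` is of type `E`.
  set Z : W → Finset V := fun h => U.filter (fun u => h ∈ E u) with hZ
  -- Claim 1: for each `u`, `A u ∪ E u` dominates `H`.
  have hDdom : ∀ u : V, H.IsDomSet ↑(A u ∪ E u) := by
    intro u h hh
    have hhA : h ∉ A u := fun hmem => hh (by simp [hmem])
    have hhE : h ∉ E u := fun hmem => hh (by simp [hmem])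
    have h0 : ∀ v, p v = u → f (v, h) = 0 := by
      intro v hv
      by_contra hne
      refine hhA ?_
      simp only [hA, mem_filter, mem_univ, true_and]
      exact ⟨v, hv, by omega⟩
    have h2 : ¬ ∀ v, p v = u → ∃ g', G.Adj v g' ∧ f (g', h) = 2 := by
      intro hall
      exact hhE (by simp only [hE, mem_filter, mem_univ, true_and]; exact ⟨h0, hall⟩)
    push_neg at h2
    obtain ⟨v, hvp, hvno⟩ := h2
    obtain ⟨⟨x1, x2⟩, hadj, hx2⟩ := hf.2 (v, h) (h0 v hvp)
    rw [SimpleGraph.boxProd_adj] at hadj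
    rcases hadj with ⟨hGadj, hsnd⟩ | ⟨hHadj, hfst⟩
    · simp only at hGadj hsnd
      subst hsnd
      exact absurd hx2 (hvno x1 hGadj)
    · simp only at hHadj hfst
      subst hfst
      refine ⟨x2, ?_, hHadj⟩
      have : x2 ∈ A u := by
        simp only [hA, mem_filter, mem_univ, true_and]
        exact ⟨v, hvp, by omega⟩
      simp [this]
  -- Claim 2: per row, `|Z h| ≤ |T h|`, by minimality of `U`.
  have hrow : ∀ h : W, (Z h).card ≤ (T h).card := by
    intro h
    have hdom' : G.IsDomSet ↑((U \ Z h) ∪ T h) := by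
      intro v hv
      by_cases hu : p v ∈ Z h
      · have hEmem : h ∈ E (p v) := (mem_filter.mp hu).2
        have hall := (mem_filter.mp hEmem).2.2
        obtain ⟨g', hadj, hg2⟩ := hall v rfl
        refine ⟨g', ?_, hadj⟩
        have : g' ∈ T h := by simp [hT, hg2]
        simp [this]
      · have hmem : p v ∈ (U \ Z h) ∪ T h := by
          simp only [mem_union, mem_sdiff]
          exact Or.inl ⟨hpU v, hu⟩
        rcases hpadj v with heq | hadj
        · refine absurd ?_ hv
          rw [heq]
          exact mem_coe.mpr hmem
        · exact ⟨p v, mem_coe.mpr hmem, hadj⟩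
    have h1 : G.domNum ≤ ((U \ Z h) ∪ T h).card := Nat.sInf_le ⟨_, hdom', rfl⟩
    have h2 : ((U \ Z h) ∪ T h).card ≤ (U.card - (Z h).card) + (T h).card := by
      refine (card_union_le _ _).trans ?_
      rw [card_sdiff_of_subset (filter_subset _ _)]
    have h3 : (Z h).card ≤ U.card := card_le_card (filter_subset _ _)
    omega
  -- Counting: the `A`-parts inject into cells of positive value.
  have hAsum : ∑ u ∈ U, (A u).card ≤ (univ.filter (fun c : V × W => 1 ≤ f c)).card := by
    have hsub : ∀ u : V, A u ⊆
        (univ.filter (fun c : V × W => p c.1 = u ∧ 1 ≤ f c)).image Prod.snd := by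
      intro u h hmem
      simp only [hA, mem_filter, mem_univ, true_and] at hmem
      obtain ⟨v, hvp, hv1⟩ := hmem
      exact mem_image.mpr ⟨(v, h), by simp [hvp, hv1], rfl⟩
    calc ∑ u ∈ U, (A u).card
        ≤ ∑ u ∈ U, (univ.filter (fun c : V × W => p c.1 = u ∧ 1 ≤ f c)).card :=
          sum_le_sum fun u _ => (card_le_card (hsub u)).trans card_image_le
      _ = (U.biUnion (fun u => univ.filter (fun c : V × W => p c.1 = u ∧ 1 ≤ f c))).card := by
          rw [card_biUnion]
          intro x _ y _ hxy
          rw [Function.onFun, Finset.disjoint_left]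
          intro c hcx hcy
          simp only [mem_filter] at hcx hcy
          exact hxy (hcx.2.1 ▸ hcy.2.1 ▸ rfl)
      _ ≤ (univ.filter (fun c : V × W => 1 ≤ f c)).card := by
          refine card_le_card ?_
          intro c hc
          simp only [mem_biUnion, mem_filter, mem_univ, true_and] at hc ⊢
          obtain ⟨u, _, _, h1⟩ := hc
          exact h1
  -- Counting: the `E`-parts, summed, are at most the number of 2-cells.
  have hEsum : ∑ u ∈ U, (E u).card ≤ (univ.filter (fun c : V × W => f c = 2)).card := by
    have e1 : ∑ u ∈ U, (E u).card = ∑ h : W, (Z h).card := by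
      have l1 : ∀ u : V, (E u).card = ∑ h : W, if h ∈ E u then 1 else 0 := by
        intro u
        rw [← Finset.sum_filter, Finset.sum_const, smul_eq_mul, mul_one]
        congr 1
        ext h
        simp
      have l2 : ∀ h : W, (Z h).card = ∑ u ∈ U, if h ∈ E u then 1 else 0 := by
        intro h
        rw [hZ]
        rw [← Finset.sum_filter, Finset.sum_const, smul_eq_mul, mul_one]
      simp only [l1, l2]
      exact Finset.sum_comm
    have e2 : (univ.filter (fun c : V × W => f c = 2)).card = ∑ h : W, (T h).card := by
      have l3 : ∀ h : W, (T h).card = ∑ v : V, if f (v, h) = 2 then 1 else 0 := by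
        intro h
        rw [hT]
        rw [← Finset.sum_filter, Finset.sum_const, smul_eq_mul, mul_one]
      have l4 : (univ.filter (fun c : V × W => f c = 2)).card
          = ∑ c : V × W, if f c = 2 then 1 else 0 := by
        rw [← Finset.sum_filter, Finset.sum_const, smul_eq_mul, mul_one]
      rw [l4, Fintype.sum_prod_type_right]
      simp only [l3]
    rw [e1, e2]
    exact sum_le_sum fun h _ => hrow h
  -- Pointwise weight bound.
  have hpoint : (univ.filter (fun c : V × W => 1 ≤ f c)).card
      + (univ.filter (fun c : V × W => f c = 2)).card ≤ ∑ c : V × W, f c := by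
    have l5 : ∀ (q : V × W → Prop) [DecidablePred q],
        (univ.filter q).card = ∑ c : V × W, if q c then 1 else 0 := by
      intro q _
      rw [← Finset.sum_filter, Finset.sum_const, smul_eq_mul, mul_one]
    rw [l5, l5, ← Finset.sum_add_distrib]
    refine sum_le_sum fun c _ => ?_
    have := hf.1 c
    split_ifs <;> omega
  -- Assemble.
  calc G.domNum * H.domNum = ∑ _u ∈ U, H.domNum := by
        rw [Finset.sum_const, smul_eq_mul, hUcard, mul_comm]
    _ ≤ ∑ u ∈ U, (A u ∪ E u).card :=
        sum_le_sum fun u _ => Nat.sInf_le ⟨A u ∪ E u, hDdom u, rfl⟩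
    _ ≤ ∑ u ∈ U, ((A u).card + (E u).card) :=
        sum_le_sum fun u _ => card_union_le _ _
    _ = (∑ u ∈ U, (A u).card) + ∑ u ∈ U, (E u).card := Finset.sum_add_distrib
    _ ≤ ∑ c : V × W, f c := by
        have := hAsum
        have := hEsum
        have := hpoint
        omega
    _ = (G.boxProd H).romanNum := hfw.symm
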